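/- Let β₀, P, H, V > 0 and let w be real. For any constant speed v with 0 < v < V and positions x_I < x_F, the energy integral splits exactly into a maximum-speed part and a residual part: ∫₀^{(x_F−x_I)/v} β₀P/((x_I + v·t − w)² + H²) dt = ∫₀^{(x_F−x_I)/V} β₀P/((x_I + V·t₁ − w)² + H²) dt₁ + ∫₀^{(x_F−x_I)/v − (x_F−x_I)/V} β₀P/((x_I + (V·v/(V−v))·t₂ − w)² + H²) dt₂. -/

import Mathlib

theorem stmt1 (β₀ P H w V v xI xF : ℝ) (hβ : 0 < β₀) (hP : 0 < P) (hH : 0 < H)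
    (hV : 0 < V) (hv : 0 < v) (hvV : v < V) (hx : xI < xF) :
    ∫ t in (0:ℝ)..((xF - xI) / v), β₀ * P / ((xI + v * t - w) ^ 2 + H ^ 2) =
      (∫ t₁ in (0:ℝ)..((xF - xI) / V),
          β₀ * P / ((xI + V * t₁ - w) ^ 2 + H ^ 2)) +
      ∫ t₂ in (0:ℝ)..((xF - xI) / v - (xF - xI) / V),
          β₀ * P / ((xI + (V * v / (V - v)) * t₂ - w) ^ 2 + H ^ 2) := by
  set f : ℝ → ℝ := fun x => β₀ * P / ((x - w) ^ 2 + H ^ 2) with hf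
  have hVv : 0 < V - v := sub_pos.mpr hvV
  have hs : (0:ℝ) < V * v / (V - v) := div_pos (mul_pos hV hv) hVv
  have key : ∀ c : ℝ, 0 < c →
      ∫ t in (0:ℝ)..((xF - xI) / c), f (xI + c * t) = c⁻¹ • ∫ x in xI..xF, f x := by
    intro c hc
    rw [intervalIntegral.integral_comp_add_mul f hc.ne' xI, mul_zero, add_zero,
      mul_div_cancel₀ _ hc.ne', add_sub_cancel]
  have e1 := key v hv
  have e2 := key V hV
  have e3 := key _ hs
  have harg : (xF - xI) / (V * v / (V - v)) = (xF - xI) / v - (xF - xI) / V := by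
    field_simp
  rw [harg] at e3
  calc ∫ t in (0:ℝ)..((xF - xI) / v), β₀ * P / ((xI + v * t - w) ^ 2 + H ^ 2)
      = ∫ t in (0:ℝ)..((xF - xI) / v), f (xI + v * t) := by simp [hf]
    _ = v⁻¹ • ∫ x in xI..xF, f x := e1
    _ = (V⁻¹ + (V * v / (V - v))⁻¹) • ∫ x in xI..xF, f x := by
        congr 1
        field_simp
        ring
    _ = (∫ t₁ in (0:ℝ)..((xF - xI) / V), f (xI + V * t₁)) +
        ∫ t₂ in (0:ℝ)..((xF - xI) / v - (xF - xI) / V),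
          f (xI + (V * v / (V - v)) * t₂) := by
        rw [e2, e3, add_smul]
    _ = _ := by simp [hf]
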